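/- Let C be an invertible diagonal real n×n matrix and γ = [[0,-C⁻¹],[C,0]] ∈ Sp(2n,ℝ). Then there exists Z in the Siegel upper half space 𝔥ₙ with γ·Z = -conj(Z); explicitly Z = iY where Y = diag(|c₁|⁻¹,…,|cₙ|⁻¹) for C = diag(c₁,…,cₙ). -/

import Mathlib

noncomputable section
open Matrix Complex

/-- 2n×2n real matrices in n×n block form. -/
abbrev SpMat (n : ℕ) := Matrix (Fin n ⊕ Fin n) (Fin n ⊕ Fin n) ℝ

/-- The standard symplectic form J = [[0,I],[-I,0]]. -/
def J (n : ℕ) : SpMat n := fromBlocks 0 1 (-1) 0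

/-- I₋ = diag(-Iₙ, Iₙ). -/
def Iminus (n : ℕ) : SpMat n := fromBlocks (-1) 0 0 1

/-- The real symplectic group Sp(2n,ℝ). -/
def Sp (n : ℕ) : Set (SpMat n) := {g | gᵀ * J n * g = J n}

/-- The involution τ(g) = I₋ g I₋. -/
def tau {n : ℕ} (g : SpMat n) : SpMat n := Iminus n * g * Iminus n

/-- The Siegel upper half space: symmetric complex matrices with positive definite
imaginary part. -/
def Siegel (n : ℕ) : Set (Matrix (Fin n) (Fin n) ℂ) :=
  {Z | Zᵀ = Z ∧ (Matrix.of fun i j => (Z i j).im).PosDef}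

/-- The action of Sp(2n,ℝ) on the Siegel space by fractional linear transformations
g·Z = (AZ+B)(CZ+D)⁻¹. -/
def act {n : ℕ} (g : SpMat n) (Z : Matrix (Fin n) (Fin n) ℂ) : Matrix (Fin n) (Fin n) ℂ :=
  (g.toBlocks₁₁.map Complex.ofReal * Z + g.toBlocks₁₂.map Complex.ofReal) *
    (g.toBlocks₂₁.map Complex.ofReal * Z + g.toBlocks₂₂.map Complex.ofReal)⁻¹

/-- Entrywise complex conjugation of a matrix. -/
def conjM {n : ℕ} (Z : Matrix (Fin n) (Fin n) ℂ) : Matrix (Fin n) (Fin n) ℂ :=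
  Z.map (starRingEnd ℂ)

/-- For γ = [[0,-C⁻¹],[C,0]] with C invertible diagonal, the point
Z = i·diag(|c₁|⁻¹,…,|cₙ|⁻¹) of the Siegel space satisfies γ·Z = -conj(Z). -/
theorem diagonal_cocycle_real_point (n : ℕ) (d : Fin n → ℝ) (hd : ∀ i, d i ≠ 0) :
    (Complex.I • (diagonal fun i => |d i|⁻¹).map Complex.ofReal) ∈ Siegel n ∧
    act (fromBlocks 0 (-(diagonal d)⁻¹) (diagonal d) 0)
        (Complex.I • (diagonal fun i => |d i|⁻¹).map Complex.ofReal)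
      = -(conjM (Complex.I • (diagonal fun i => |d i|⁻¹).map Complex.ofReal)) := by
  have habs : ∀ i, |d i| ≠ 0 := fun i => abs_ne_zero.mpr (hd i)
  have hmap : (diagonal fun i => |d i|⁻¹).map Complex.ofReal
      = diagonal fun i => ((|d i|⁻¹ : ℝ) : ℂ) := by
    rw [diagonal_map (by simp)]
  constructor
  · constructor
    · rw [hmap, transpose_smul, diagonal_transpose]
    · have : (Matrix.of fun i j =>
          ((Complex.I • (diagonal fun i => |d i|⁻¹).map Complex.ofReal) i j).im)
          = diagonal fun i => |d i|⁻¹ := by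
        ext i j
        rw [hmap]
        by_cases h : i = j <;>
          simp [diagonal_apply, h]
        rw [← abs_mul_abs_self, div_mul_eq_div_div, div_self (habs j), one_div]
      rw [this]
      exact posDef_diagonal_iff.mpr fun i => by have := habs i; positivity
  · -- the action computation
    rw [hmap]
    simp only [act, toBlocks_fromBlocks₁₁, toBlocks_fromBlocks₁₂, toBlocks_fromBlocks₂₁,
      toBlocks_fromBlocks₂₂, Matrix.map_zero _ Complex.ofReal_zero, zero_mul, zero_add,
      add_zero]
    have hB : ((-(diagonal d)⁻¹ : Matrix (Fin n) (Fin n) ℝ)).map Complex.ofReal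
        = -(diagonal fun i => (((d i)⁻¹ : ℝ) : ℂ)) := by
      have h1 : ((diagonal d)⁻¹ : Matrix (Fin n) (Fin n) ℝ)
          = diagonal fun i => (d i)⁻¹ := by
        apply inv_eq_right_inv
        rw [diagonal_mul_diagonal]
        have : (fun i => d i * (d i)⁻¹) = fun _ => (1 : ℝ) :=
          funext fun i => mul_inv_cancel₀ (hd i)
        rw [this, diagonal_one]
      rw [h1]
      ext i j
      by_cases h : i = j <;>
        simp [diagonal_apply, h]
    have hC : (diagonal d).map Complex.ofReal = diagonal fun i => ((d i : ℝ) : ℂ) := by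
      rw [diagonal_map (by simp)]
    rw [hB, hC, mul_smul_comm]
    have hprod : (diagonal fun i => ((d i : ℝ) : ℂ)) * (diagonal fun i => ((|d i|⁻¹ : ℝ) : ℂ))
        = diagonal fun i => ((d i : ℂ) * ((|d i|⁻¹ : ℝ) : ℂ)) := by
      rw [diagonal_mul_diagonal]
    rw [hprod]
    have hsmul : (Complex.I • diagonal fun i => ((d i : ℂ) * ((|d i|⁻¹ : ℝ) : ℂ)))
        = diagonal fun i => Complex.I * ((d i : ℂ) * ((|d i|⁻¹ : ℝ) : ℂ)) := by
      ext i j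
      by_cases h : i = j <;>
        simp [diagonal_apply, h]
    rw [hsmul]
    have hinv2 : (diagonal fun i => Complex.I * ((d i : ℂ) * ((|d i|⁻¹ : ℝ) : ℂ)))⁻¹
        = diagonal fun i => (Complex.I * ((d i : ℂ) * ((|d i|⁻¹ : ℝ) : ℂ)))⁻¹ := by
      apply inv_eq_right_inv
      rw [diagonal_mul_diagonal]
      have hne : ∀ i, Complex.I * ((d i : ℂ) * ((|d i|⁻¹ : ℝ) : ℂ)) ≠ 0 := fun i => by
        apply mul_ne_zero Complex.I_ne_zero
        exact mul_ne_zero (Complex.ofReal_ne_zero.mpr (hd i))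
          (Complex.ofReal_ne_zero.mpr (inv_ne_zero (habs i)))
      have : (fun i => Complex.I * ((d i : ℂ) * ((|d i|⁻¹ : ℝ) : ℂ)) *
          (Complex.I * ((d i : ℂ) * ((|d i|⁻¹ : ℝ) : ℂ)))⁻¹) = fun _ => (1 : ℂ) :=
        funext fun i => mul_inv_cancel₀ (hne i)
      rw [this, diagonal_one]
    rw [hinv2]
    have hfin : (-(diagonal fun i => (((d i)⁻¹ : ℝ) : ℂ))) *
        (diagonal fun i => (Complex.I * ((d i : ℂ) * ((|d i|⁻¹ : ℝ) : ℂ)))⁻¹)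
        = diagonal fun i => -(((d i)⁻¹ : ℝ) : ℂ) *
            (Complex.I * ((d i : ℂ) * ((|d i|⁻¹ : ℝ) : ℂ)))⁻¹ := by
      rw [neg_mul, diagonal_mul_diagonal, diagonal_neg]
      exact congrArg Matrix.diagonal (funext fun i => (neg_mul _ _).symm)
    rw [hfin]
    have hconj : -(conjM (Complex.I • diagonal fun i => ((|d i|⁻¹ : ℝ) : ℂ)))
        = diagonal fun i => Complex.I * ((|d i|⁻¹ : ℝ) : ℂ) := by
      ext i j
      by_cases h : i = j <;>
        simp [conjM, diagonal_apply, h, Complex.conj_ofReal]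
    rw [hconj]
    refine congrArg Matrix.diagonal (funext fun i => ?_)
    have hdC : (d i : ℂ) ≠ 0 := Complex.ofReal_ne_zero.mpr (hd i)
    have haC : ((|d i| : ℝ) : ℂ) ≠ 0 := Complex.ofReal_ne_zero.mpr (habs i)
    have hsq : ((|d i| : ℝ) : ℂ) * ((|d i| : ℝ) : ℂ) = (d i : ℂ) * (d i : ℂ) := by
      rw [← Complex.ofReal_mul, ← Complex.ofReal_mul, abs_mul_abs_self]
    rw [Complex.ofReal_inv, Complex.ofReal_inv]
    field_simp
    linear_combination (-1 : ℂ) * hsq - (d i : ℂ) ^ 2 * Complex.I_sq
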